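/- Let a, b ∈ ℝ with a ≠ 0, β > 0, γ the Euler–Mascheroni constant, and let (ξ_n)_{n≥0} be i.i.d. standard normal. Define x_0 = 0, l_0 = 0, x_{n+1} = b/a + ξ_n/(2^{l_n}√2 a β) with l_{n+1} ∈ ℤ chosen so that 2^{l_{n+1}}|b - a x_{n+1}| ∈ (1/2, 1]. If 1 ≤ s < β e^{γ/2}, then s^n (x_n - b/a) → 0 almost surely. -/

import Mathlib

section Helpers

open MeasureTheory Real Set Filter ProbabilityTheory
open scoped NNReal ENNReal

lemma gammaLogHalf :
    ∫ t in Ioi (0:ℝ), t ^ (-(1/2):ℝ) * Real.log t * Real.exp (-t)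
      = -Real.sqrt π * (Real.eulerMascheroniConstant + 2 * Real.log 2) := by
  have hre : (0:ℝ) < (1/2 : ℂ).re := by norm_num
  have h1 := Complex.hasDerivAt_GammaIntegral hre
  have heq : Complex.Gamma =ᶠ[nhds (1/2 : ℂ)] Complex.GammaIntegral := by
    filter_upwards [(isOpen_lt continuous_const Complex.continuous_re).mem_nhds hre] with s hs
    exact Complex.Gamma_eq_integral hs
  have h2 : HasDerivAt Complex.Gamma
      (∫ t : ℝ in Ioi 0, (t:ℂ) ^ ((1/2 : ℂ) - 1) * ((Real.log t : ℂ) * (Real.exp (-t) : ℂ)))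
      (1/2 : ℂ) := h1.congr_of_eventuallyEq heq
  have h3 := Complex.hasDerivAt_Gamma_one_half
  have hD := h2.unique h3
  have hcast : (∫ t : ℝ in Ioi 0, (t:ℂ) ^ ((1/2 : ℂ) - 1) * ((Real.log t : ℂ) * (Real.exp (-t) : ℂ)))
      = ((∫ t in Ioi (0:ℝ), t ^ (-(1/2):ℝ) * Real.log t * Real.exp (-t) : ℝ) : ℂ) := by
    have : (fun t : ℝ => (t:ℂ) ^ ((1/2 : ℂ) - 1) * ((Real.log t : ℂ) * (Real.exp (-t) : ℂ)))
        =ᵐ[volume.restrict (Ioi (0:ℝ))]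
        (fun t : ℝ => ((t ^ (-(1/2):ℝ) * Real.log t * Real.exp (-t) : ℝ) : ℂ)) := by
      filter_upwards [ae_restrict_mem measurableSet_Ioi] with t ht
      have h4 : ((t ^ (-(1/2):ℝ) : ℝ) : ℂ) = (t:ℂ) ^ ((1/2 : ℂ) - 1) := by
        rw [Complex.ofReal_cpow (le_of_lt ht)]
        norm_num
      rw [← h4]; push_cast; ring
    rw [integral_congr_ae this]; exact integral_ofReal (𝕜 := ℂ)
  rw [hcast] at hD
  have h5 : ((-Real.sqrt π * (Real.eulerMascheroniConstant + 2 * Real.log 2) : ℝ) : ℂ)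
      = -(Real.sqrt π : ℂ) * ((Real.eulerMascheroniConstant : ℂ) + 2 * Complex.log 2) := by
    have : ((Real.log 2 : ℝ) : ℂ) = Complex.log 2 := by
      rw [Complex.ofReal_log (by norm_num : (0:ℝ) ≤ 2)]; norm_num
    push_cast [← this]; ring
  rw [← h5] at hD
  exact_mod_cast hD

lemma gammaHalf :
    ∫ t in Ioi (0:ℝ), t ^ (-(1/2):ℝ) * Real.exp (-t) = Real.sqrt π := by
  have := Real.Gamma_eq_integral one_half_pos
  rw [Real.Gamma_one_half_eq] at this
  rw [this]
  refine setIntegral_congr_fun measurableSet_Ioi (fun t ht => ?_)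
  norm_num [mul_comm]

lemma intGammaHalf : IntegrableOn (fun t : ℝ => t ^ (-(1/2):ℝ) * Real.exp (-t)) (Ioi 0) := by
  have := Real.GammaIntegral_convergent one_half_pos
  refine this.congr_fun (fun t ht => ?_) measurableSet_Ioi
  norm_num [mul_comm]

lemma intB : IntegrableOn (fun t : ℝ => t ^ (-(1/2):ℝ) * Real.log t * Real.exp (-t)) (Ioi 0) := by
  have h14 := Real.GammaIntegral_convergent (by norm_num : (0:ℝ) < 1/4)
  have h32 := Real.GammaIntegral_convergent (by norm_num : (0:ℝ) < 3/2)
  have hbound : IntegrableOn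
      (fun t : ℝ => 4 * (Real.exp (-t) * t ^ ((1/4:ℝ) - 1)) + Real.exp (-t) * t ^ ((3/2:ℝ) - 1))
      (Ioi 0) := (h14.const_mul 4).add h32
  refine Integrable.mono' hbound ?_ ?_
  · apply Measurable.aestronglyMeasurable
    exact ((measurable_id'.pow measurable_const).mul Real.measurable_log).mul (measurable_exp.comp measurable_neg)
  · filter_upwards [ae_restrict_mem measurableSet_Ioi] with t (ht : 0 < t)
    have hexp : 0 < Real.exp (-t) := Real.exp_pos _
    have hrp : (0:ℝ) < t ^ (-(1/2):ℝ) := Real.rpow_pos_of_pos ht _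
    rw [Real.norm_eq_abs, abs_mul, abs_mul, abs_of_pos hrp, abs_of_pos hexp]
    rcases le_total t 1 with h1 | h1
    · have hlog : |Real.log t| ≤ 4 * t ^ (-(1/4):ℝ) := by
        have hl0 : Real.log t ≤ 0 := Real.log_nonpos ht.le h1
        rw [abs_of_nonpos hl0]
        have : Real.log (t ^ (-(1/4):ℝ)) ≤ t ^ (-(1/4):ℝ) - 1 :=
          Real.log_le_sub_one_of_pos (Real.rpow_pos_of_pos ht _)
        rw [Real.log_rpow ht] at this
        nlinarith [Real.rpow_pos_of_pos ht (-(1/4):ℝ)]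
      have : t ^ (-(1/2):ℝ) * |Real.log t| * Real.exp (-t)
          ≤ 4 * (Real.exp (-t) * t ^ ((1/4:ℝ) - 1)) := by
        have h2 : t ^ (-(1/2):ℝ) * (4 * t ^ (-(1/4):ℝ)) = 4 * t ^ ((1/4:ℝ) - 1) := by
          rw [mul_comm, mul_assoc, ← Real.rpow_add ht]
          norm_num
        calc t ^ (-(1/2):ℝ) * |Real.log t| * Real.exp (-t)
            ≤ t ^ (-(1/2):ℝ) * (4 * t ^ (-(1/4):ℝ)) * Real.exp (-t) := by
              apply mul_le_mul_of_nonneg_right (mul_le_mul_of_nonneg_left hlog hrp.le) hexp.le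
          _ = 4 * (Real.exp (-t) * t ^ ((1/4:ℝ) - 1)) := by rw [h2]; ring
      refine this.trans (le_add_of_nonneg_right ?_)
      positivity
    · have hlog : |Real.log t| ≤ t := by
        rw [abs_of_nonneg (Real.log_nonneg h1)]
        linarith [Real.log_le_sub_one_of_pos ht]
      have : t ^ (-(1/2):ℝ) * |Real.log t| * Real.exp (-t)
          ≤ Real.exp (-t) * t ^ ((3/2:ℝ) - 1) := by
        have h2 : t ^ (-(1/2):ℝ) * t = t ^ ((3/2:ℝ) - 1) := by
          nth_rewrite 2 [← Real.rpow_one t]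
          rw [← Real.rpow_add ht]; norm_num
        calc t ^ (-(1/2):ℝ) * |Real.log t| * Real.exp (-t)
            ≤ t ^ (-(1/2):ℝ) * t * Real.exp (-t) := by
              apply mul_le_mul_of_nonneg_right (mul_le_mul_of_nonneg_left hlog hrp.le) hexp.le
          _ = Real.exp (-t) * t ^ ((3/2:ℝ) - 1) := by rw [h2]; ring
      refine this.trans (le_add_of_nonneg_left ?_)
      positivity

lemma integrable_comp_abs'' {f : ℝ → ℝ} (hf : IntegrableOn f (Ioi 0)) :
    Integrable (fun x : ℝ => f |x|) := by
  have hIoi : IntegrableOn (fun x : ℝ => f |x|) (Ioi 0) := by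
    refine hf.congr_fun (fun x hx => ?_) measurableSet_Ioi
    rw [abs_of_pos hx]
  have int_Iic : IntegrableOn (fun x : ℝ => f |x|) (Iic 0) := by
    rw [← Measure.map_neg_eq_self (volume : Measure ℝ)]
    have m : MeasurableEmbedding fun x : ℝ => -x := (Homeomorph.neg ℝ).measurableEmbedding
    rw [m.integrableOn_map_iff]
    simp_rw [Function.comp_def, abs_neg, neg_preimage, neg_Iic, neg_zero]
    exact Iff.mpr integrableOn_Ici_iff_integrableOn_Ioi hIoi
  have := int_Iic.union hIoi
  rwa [Iic_union_Ioi, integrableOn_univ] at this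

lemma int_gauss_abs {s : ℝ} (hs : -1 < s) :
    Integrable (fun x : ℝ => |x| ^ s * Real.exp (-(1/2) * x ^ 2)) := by
  have h := integrable_comp_abs''
    ((integrable_rpow_mul_exp_neg_mul_sq (by norm_num : (0:ℝ) < 1/2) hs).integrableOn
      (s := Ioi 0))
  exact h.congr (Eventually.of_forall fun x => by simp [sq_abs])

lemma log_abs_bound (x : ℝ) : |Real.log x| ≤ 2 * |x| ^ (-(1/2):ℝ) + |x| := by
  rcases eq_or_ne x 0 with rfl | hx
  · simp
  · have ht : 0 < |x| := abs_pos.mpr hx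
    rw [← Real.log_abs]
    set t := |x| with htdef
    rcases le_total t 1 with h1 | h1
    · have hl0 : Real.log t ≤ 0 := Real.log_nonpos ht.le h1
      rw [abs_of_nonpos hl0]
      have h2 : Real.log (t ^ (-(1/2):ℝ)) ≤ t ^ (-(1/2):ℝ) - 1 :=
        Real.log_le_sub_one_of_pos (Real.rpow_pos_of_pos ht _)
      rw [Real.log_rpow ht] at h2
      nlinarith [Real.rpow_pos_of_pos ht (-(1/2):ℝ)]
    · rw [abs_of_nonneg (Real.log_nonneg h1)]
      have := Real.log_le_sub_one_of_pos ht
      have : (0:ℝ) ≤ t ^ (-(1/2):ℝ) := (Real.rpow_pos_of_pos ht _).le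
      nlinarith [Real.log_le_sub_one_of_pos ht]

lemma integrable_log_gaussian : Integrable Real.log (gaussianReal 0 1) := by
  rw [gaussianReal_of_var_ne_zero 0 one_ne_zero]
  have hpdf_eq : (gaussianPDF 0 1)
      = fun x => ((Real.toNNReal (gaussianPDFReal 0 1 x) : ℝ≥0) : ℝ≥0∞) := rfl
  rw [hpdf_eq, integrable_withDensity_iff_integrable_smul
    ((measurable_gaussianPDFReal 0 1).real_toNNReal)]
  have hsmul : (fun x => (Real.toNNReal (gaussianPDFReal 0 1 x)) • Real.log x)
      = fun x => gaussianPDFReal 0 1 x * Real.log x := by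
    funext x
    rw [NNReal.smul_def, Real.coe_toNNReal _ (gaussianPDFReal_nonneg 0 1 x), smul_eq_mul]
  rw [hsmul]
  have hint : Integrable (fun x : ℝ => (Real.sqrt (2*π))⁻¹ *
      (2 * (|x| ^ (-(1/2):ℝ) * Real.exp (-(1/2) * x ^ 2)) + |x| ^ (1:ℝ) * Real.exp (-(1/2) * x ^ 2))) := by
    exact (((int_gauss_abs (by norm_num : (-1:ℝ) < -(1/2))).const_mul 2).add
      (int_gauss_abs (by norm_num : (-1:ℝ) < 1))).const_mul _
  refine hint.mono' ?_ ?_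
  · exact ((measurable_gaussianPDFReal 0 1).mul Real.measurable_log).aestronglyMeasurable
  · refine Eventually.of_forall (fun x => ?_)
    have hc : (0:ℝ) < (Real.sqrt (2*π))⁻¹ := by positivity
    have hpdf : gaussianPDFReal 0 1 x
        = (Real.sqrt (2*π))⁻¹ * Real.exp (-(1/2) * x ^ 2) := by
      unfold gaussianPDFReal
      push_cast
      ring_nf
    rw [Real.norm_eq_abs, abs_mul, hpdf,
      abs_of_nonneg (by positivity : (0:ℝ) ≤ (Real.sqrt (2*π))⁻¹ * Real.exp (-(1/2) * x ^ 2))]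
    have hb := log_abs_bound x
    have hexp : (0:ℝ) < Real.exp (-(1/2) * x ^ 2) := Real.exp_pos _
    calc (Real.sqrt (2*π))⁻¹ * Real.exp (-(1/2) * x ^ 2) * |Real.log x|
        ≤ (Real.sqrt (2*π))⁻¹ * Real.exp (-(1/2) * x ^ 2) * (2 * |x| ^ (-(1/2):ℝ) + |x|) := by
          apply mul_le_mul_of_nonneg_left hb (by positivity)
      _ = (Real.sqrt (2*π))⁻¹ *
          (2 * (|x| ^ (-(1/2):ℝ) * Real.exp (-(1/2) * x ^ 2)) + |x| ^ (1:ℝ) * Real.exp (-(1/2) * x ^ 2)) := by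
          rw [Real.rpow_one]; ring

lemma integral_log_gaussian :
    ∫ x, Real.log x ∂(gaussianReal 0 1) = -(Real.eulerMascheroniConstant + Real.log 2) / 2 := by
  have hpdf : ∀ x : ℝ, gaussianPDFReal 0 1 x
      = (Real.sqrt (2*π))⁻¹ * Real.exp (-(1/2) * x^2) := by
    intro x; unfold gaussianPDFReal; push_cast; ring_nf
  have h1 : ∫ x, Real.log x ∂(gaussianReal 0 1)
      = ∫ x, (Real.sqrt (2*π))⁻¹ * (Real.exp (-(1/2) * x^2) * Real.log x) := by
    rw [gaussianReal_of_var_ne_zero 0 one_ne_zero]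
    have hpdf_eq : (gaussianPDF 0 1)
        = fun x => ((Real.toNNReal (gaussianPDFReal 0 1 x) : ℝ≥0) : ℝ≥0∞) := rfl
    rw [hpdf_eq, integral_withDensity_eq_integral_smul
      ((measurable_gaussianPDFReal 0 1).real_toNNReal)]
    congr 1
    funext x
    rw [NNReal.smul_def, Real.coe_toNNReal _ (gaussianPDFReal_nonneg 0 1 x), smul_eq_mul,
      hpdf x, mul_assoc]
  rw [h1, integral_const_mul]
  have h2 : ∫ x : ℝ, Real.exp (-(1/2) * x^2) * Real.log x
      = 2 * ∫ t in Ioi (0:ℝ), Real.exp (-(1/2) * t^2) * Real.log t := by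
    rw [← integral_comp_abs (f := fun t => Real.exp (-(1/2) * t^2) * Real.log t)]
    congr 1
    funext x
    rw [Real.log_abs, sq_abs]
  rw [h2]
  have h3 : ∫ t in Ioi (0:ℝ), Real.exp (-(1/2) * t^2) * Real.log t
      = (1/4) * ∫ t in Ioi (0:ℝ), t ^ (-(1/2):ℝ) * Real.log t * Real.exp (-(1/2) * t) := by
    rw [← integral_comp_rpow_Ioi (fun y => Real.exp (-(1/2) * y^2) * Real.log y)
      (by norm_num : (1/2:ℝ) ≠ 0), ← integral_const_mul]
    refine setIntegral_congr_fun measurableSet_Ioi (fun t ht => ?_)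
    have ht' : (0:ℝ) < t := ht
    have hsq : (t ^ ((1/2):ℝ)) ^ 2 = t := by
      rw [← Real.rpow_natCast (t ^ ((1/2):ℝ)) 2, ← Real.rpow_mul ht'.le]
      norm_num
    have hlog : Real.log (t ^ ((1/2):ℝ)) = (1/2) * Real.log t := Real.log_rpow ht' _
    rw [smul_eq_mul, hsq, hlog, show (1/2 : ℝ) - 1 = -(1/2) by norm_num,
      abs_of_nonneg (by norm_num : (0:ℝ) ≤ 1/2)]
    ring
  rw [h3]
  have h4 : ∫ t in Ioi (0:ℝ), t ^ (-(1/2):ℝ) * Real.log t * Real.exp (-(1/2) * t)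
      = 2 * ∫ u in Ioi (0:ℝ),
          (2:ℝ) ^ (-(1/2):ℝ) * (Real.log 2 * (u ^ (-(1/2):ℝ) * Real.exp (-u))
            + u ^ (-(1/2):ℝ) * Real.log u * Real.exp (-u)) := by
    have hs := integral_comp_mul_left_Ioi
      (fun t : ℝ => t ^ (-(1/2):ℝ) * Real.log t * Real.exp (-(1/2) * t)) 0
      (by norm_num : (0:ℝ) < 2)
    rw [mul_zero, smul_eq_mul] at hs
    have : ∫ t in Ioi (0:ℝ), t ^ (-(1/2):ℝ) * Real.log t * Real.exp (-(1/2) * t)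
        = 2 * ∫ x in Ioi (0:ℝ),
            ((2*x) ^ (-(1/2):ℝ) * Real.log (2*x) * Real.exp (-(1/2) * (2*x))) := by
      rw [hs]; ring
    rw [this]
    congr 1
    refine setIntegral_congr_fun measurableSet_Ioi (fun u hu => ?_)
    have hu' : (0:ℝ) < u := hu
    rw [Real.mul_rpow (by norm_num) hu'.le, Real.log_mul (by norm_num) hu'.ne',
      show -(1/2) * (2*u) = -u by ring]
    ring
  rw [h4]
  have h5 : ∫ u in Ioi (0:ℝ),
      (2:ℝ) ^ (-(1/2):ℝ) * (Real.log 2 * (u ^ (-(1/2):ℝ) * Real.exp (-u))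
        + u ^ (-(1/2):ℝ) * Real.log u * Real.exp (-u))
      = (2:ℝ) ^ (-(1/2):ℝ) * (Real.log 2 * Real.sqrt π
          + (-Real.sqrt π * (Real.eulerMascheroniConstant + 2 * Real.log 2))) := by
    rw [integral_const_mul]
    congr 1
    have hA : IntegrableOn (fun u : ℝ => Real.log 2 * (u ^ (-(1/2):ℝ) * Real.exp (-u)))
        (Ioi (0:ℝ)) := by
      have := intGammaHalf.const_mul (Real.log 2)
      exact this
    rw [integral_add hA intB, integral_const_mul]
    congr 1
    · congr 1
      have : (fun u : ℝ => u ^ (-(1/2):ℝ) * Real.exp (-u))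
          = fun t : ℝ => t ^ (-(1/2):ℝ) * Real.exp (-t) := rfl
      rw [this, gammaHalf]
    · exact gammaLogHalf
  rw [h5]
  have e1 : Real.sqrt (2*π) = Real.sqrt 2 * Real.sqrt π := Real.sqrt_mul (by norm_num) π
  have e2 : (2:ℝ) ^ (-(1/2):ℝ) = (Real.sqrt 2)⁻¹ := by
    rw [Real.rpow_neg (by norm_num), Real.sqrt_eq_rpow]
  have h2pos : (0:ℝ) < Real.sqrt 2 := Real.sqrt_pos.mpr (by norm_num)
  have hπpos : (0:ℝ) < Real.sqrt π := Real.sqrt_pos.mpr Real.pi_pos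
  have h22 : Real.sqrt 2 * Real.sqrt 2 = 2 := Real.mul_self_sqrt (by norm_num)
  rw [e1, e2]
  have key : (Real.sqrt 2 * Real.sqrt π)⁻¹ * (2 * (1/4 * (2 * ((Real.sqrt 2)⁻¹ *
        (Real.log 2 * Real.sqrt π
          + -Real.sqrt π * (Real.eulerMascheroniConstant + 2 * Real.log 2))))))
      = (Real.sqrt 2 * Real.sqrt 2)⁻¹ * (((Real.sqrt π)⁻¹ * Real.sqrt π) *
          (-(Real.eulerMascheroniConstant + Real.log 2))) := by ring
  rw [key, h22, inv_mul_cancel₀ hπpos.ne']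
  ring

end Helpers

open MeasureTheory ProbabilityTheory Filter

/-- Exponential a.s. convergence of the iterated quantum-annealing correction algorithm:
if `1 ≤ s < β e^{γ/2}`, then `s^n (x_n - b/a) → 0` almost surely. -/
theorem iterative_scheme_convergence
    {Ω : Type*} [MeasureSpace Ω] [IsProbabilityMeasure (ℙ : Measure Ω)]
    (a b β s : ℝ) (ha : a ≠ 0) (hβ : 0 < β)
    (ξ : ℕ → Ω → ℝ) (hmeas : ∀ n, Measurable (ξ n))
    (hindep : iIndepFun ξ ℙ)
    (hgauss : ∀ n, Measure.map (ξ n) ℙ = gaussianReal 0 1)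
    (x : ℕ → Ω → ℝ) (l : ℕ → Ω → ℤ)
    (hx0 : ∀ ω, x 0 ω = 0) (hl0 : ∀ ω, l 0 ω = 0)
    (hx : ∀ n ω, x (n + 1) ω = b / a + ξ n ω / ((2 : ℝ) ^ (l n ω) * Real.sqrt 2 * a * β))
    (hl : ∀ n ω, b - a * x (n + 1) ω ≠ 0 →
      (2 : ℝ) ^ (l (n + 1) ω) * |b - a * x (n + 1) ω| ∈ Set.Ioc (1 / 2 : ℝ) 1)
    (hs1 : 1 ≤ s) (hs2 : s < β * Real.exp (Real.eulerMascheroniConstant / 2)) :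
    ∀ᵐ ω ∂ℙ, Tendsto (fun n => s ^ n * (x n ω - b / a)) atTop (nhds 0) := by
  have hs0 : (0:ℝ) < s := zero_lt_one.trans_le hs1
  have hsqrt2 : (0:ℝ) < Real.sqrt 2 := Real.sqrt_pos.mpr (by norm_num)
  have h22 : Real.sqrt 2 * Real.sqrt 2 = 2 := Real.mul_self_sqrt (by norm_num)
  set μ₀ : ℝ := -(Real.eulerMascheroniConstant + Real.log 2) / 2 with hμ₀
  set Y : ℕ → Ω → ℝ := fun i ω => Real.log (ξ i ω) with hYdef
  have hint : Integrable (Y 0) ℙ := by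
    have h := integrable_log_gaussian
    rw [← hgauss 0] at h
    exact (integrable_map_measure Real.measurable_log.aestronglyMeasurable
      (hmeas 0).aemeasurable).mp h
  have hindep' : Pairwise (Function.onFun (IndepFun · · ℙ) Y) := by
    intro i j hij
    exact (hindep.indepFun hij).comp Real.measurable_log Real.measurable_log
  have hident : ∀ i, IdentDistrib (Y i) (Y 0) ℙ ℙ := by
    intro i
    have hid : IdentDistrib (ξ i) (ξ 0) ℙ ℙ :=
      ⟨(hmeas i).aemeasurable, (hmeas 0).aemeasurable, by rw [hgauss i, hgauss 0]⟩
    exact hid.comp Real.measurable_log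
  have hmean : ∫ ωx, Y 0 ωx ∂ℙ = μ₀ := by
    have h := integral_map (hmeas 0).aemeasurable
      (Real.measurable_log.aestronglyMeasurable (μ := Measure.map (ξ 0) ℙ))
    rw [hgauss 0, integral_log_gaussian] at h
    exact h.symm
  have hSLLN := ProbabilityTheory.strong_law_ae_real Y hint hindep' hident
  rw [hmean] at hSLLN
  have hne : ∀ᵐ ω ∂ℙ, ∀ n, ξ n ω ≠ 0 := by
    rw [ae_all_iff]
    intro n
    have h0 : ℙ {ω | ξ n ω = 0} = 0 := by
      have hset : {ω | ξ n ω = 0} = ξ n ⁻¹' {0} := rfl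
      rw [hset, ← Measure.map_apply (hmeas n) (measurableSet_singleton 0), hgauss n]
      exact (gaussianReal_absolutelyContinuous 0 one_ne_zero) (measure_singleton 0)
    rw [ae_iff]
    simpa using h0
  filter_upwards [hSLLN, hne] with ω hlim hξ
  -- pathwise argument
  set u : ℕ → ℝ := fun n => ((2:ℝ) ^ (l n ω))⁻¹ with hudef
  have hDpos : ∀ n, (0:ℝ) < (2:ℝ) ^ (l n ω) := fun n => zpow_pos (by norm_num) _
  have hupos : ∀ n, 0 < u n := fun n => inv_pos.mpr (hDpos n)
  have hu0 : u 0 = 1 := by simp [hudef, hl0 ω]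
  have hdenom : ∀ n, (2:ℝ) ^ (l n ω) * Real.sqrt 2 * a * β ≠ 0 := by
    intro n
    exact mul_ne_zero (mul_ne_zero (mul_ne_zero (hDpos n).ne' hsqrt2.ne') ha) hβ.ne'
  have hdiff : ∀ n, x (n+1) ω - b/a = ξ n ω / ((2:ℝ) ^ (l n ω) * Real.sqrt 2 * a * β) := by
    intro n; rw [hx n ω]; ring
  have habs : ∀ n, |x (n+1) ω - b/a| = u n * |ξ n ω| / (Real.sqrt 2 * |a| * β) := by
    intro n
    rw [hdiff n, abs_div, abs_mul, abs_mul, abs_mul, abs_of_pos (hDpos n), abs_of_pos hsqrt2,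
      abs_of_pos hβ]
    rw [hudef]
    ring
  have hdne : ∀ n, x (n+1) ω - b/a ≠ 0 := by
    intro n
    rw [hdiff n]
    exact div_ne_zero (hξ n) (hdenom n)
  have hfact : ∀ n, b - a * x (n+1) ω = -(a * (x (n+1) ω - b/a)) := by
    intro n; field_simp; ring
  have hne' : ∀ n, b - a * x (n+1) ω ≠ 0 := by
    intro n
    rw [hfact n]
    exact neg_ne_zero.mpr (mul_ne_zero ha (hdne n))
  have hrec : ∀ n, u (n+1) ≤ Real.sqrt 2 * |ξ n ω| / β * u n := by
    intro n
    obtain ⟨h12, _⟩ := hl n ω (hne' n)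
    have hA : |b - a * x (n+1) ω| = |a| * |x (n+1) ω - b/a| := by
      rw [hfact n, abs_neg, abs_mul]
    have hApos : (0:ℝ) < |b - a * x (n+1) ω| := abs_pos.mpr (hne' n)
    have hy := hDpos (n+1)
    have hlt : u (n+1) < 2 * |b - a * x (n+1) ω| := by
      have h1 : u (n+1) * (2:ℝ) ^ (l (n+1) ω) = 1 := inv_mul_cancel₀ hy.ne'
      have h2 : u (n+1) * (2:ℝ) ^ (l (n+1) ω)
          < (2 * |b - a * x (n+1) ω|) * (2:ℝ) ^ (l (n+1) ω) := by
        rw [h1]; nlinarith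
      exact lt_of_mul_lt_mul_right h2 hy.le
    rw [hA, habs n] at hlt
    have haabs : (0:ℝ) < |a| := abs_pos.mpr ha
    calc u (n+1) ≤ 2 * (|a| * (u n * |ξ n ω| / (Real.sqrt 2 * |a| * β))) := hlt.le
      _ = Real.sqrt 2 * |ξ n ω| / β * u n := by
          field_simp
          linear_combination (-(u n * |ξ n ω|)) * h22
  have hbound : ∀ n, u n ≤ ∏ i ∈ Finset.range n, (Real.sqrt 2 * |ξ i ω| / β) := by
    intro n
    induction n with
    | zero => simp [hu0]
    | succ m ih =>
      have hfac : 0 ≤ Real.sqrt 2 * |ξ m ω| / β := by positivity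
      calc u (m+1) ≤ Real.sqrt 2 * |ξ m ω| / β * u m := hrec m
        _ ≤ Real.sqrt 2 * |ξ m ω| / β * ∏ i ∈ Finset.range m, (Real.sqrt 2 * |ξ i ω| / β) :=
            mul_le_mul_of_nonneg_left ih hfac
        _ = ∏ i ∈ Finset.range (m+1), (Real.sqrt 2 * |ξ i ω| / β) := by
            rw [Finset.prod_range_succ]; ring
  set q : ℕ → ℝ := fun n => ∏ i ∈ Finset.range n, (s * (Real.sqrt 2 * |ξ i ω| / β)) with hqdef
  set c : ℝ := Real.log s + Real.log (Real.sqrt 2) - Real.log β with hcdef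
  have hqexp : ∀ n, q n = Real.exp ((n:ℝ) * c + ∑ i ∈ Finset.range n, Y i ω) := by
    intro n
    have hlogf : ∀ i, Real.log (s * (Real.sqrt 2 * |ξ i ω| / β)) = c + Y i ω := by
      intro i
      have h1 : (0:ℝ) < |ξ i ω| := abs_pos.mpr (hξ i)
      rw [Real.log_mul hs0.ne' (by positivity), Real.log_div (by positivity) hβ.ne',
        Real.log_mul hsqrt2.ne' h1.ne', Real.log_abs]
      simp only [hYdef, hcdef]
      ring
    have hpos : ∀ i, (0:ℝ) < s * (Real.sqrt 2 * |ξ i ω| / β) := by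
      intro i
      have : (0:ℝ) < |ξ i ω| := abs_pos.mpr (hξ i)
      positivity
    calc q n = ∏ i ∈ Finset.range n, Real.exp (c + Y i ω) := by
          refine Finset.prod_congr rfl (fun i _ => ?_)
          rw [← hlogf i, Real.exp_log (hpos i)]
      _ = Real.exp (∑ i ∈ Finset.range n, (c + Y i ω)) := (Real.exp_sum _ _).symm
      _ = Real.exp ((n:ℝ) * c + ∑ i ∈ Finset.range n, Y i ω) := by
          rw [Finset.sum_add_distrib, Finset.sum_const, Finset.card_range, nsmul_eq_mul]
  have hcμ : c + μ₀ < 0 := by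
    have hlog2 : Real.log (Real.sqrt 2) = Real.log 2 / 2 := Real.log_sqrt (by norm_num)
    have hlt : Real.log s < Real.log β + Real.eulerMascheroniConstant / 2 := by
      have h := Real.log_lt_log hs0 hs2
      rwa [Real.log_mul hβ.ne' (Real.exp_ne_zero _), Real.log_exp] at h
    rw [hcdef, hμ₀, hlog2]
    linarith
  have hAtendsto : Tendsto (fun n : ℕ => (n:ℝ) * c + ∑ i ∈ Finset.range n, Y i ω)
      atTop atBot := by
    have hdiv : Tendsto (fun n : ℕ => ((n:ℝ) * c + ∑ i ∈ Finset.range n, Y i ω) / n)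
        atTop (nhds (c + μ₀)) := by
      have h1 : Tendsto (fun n : ℕ => c + (∑ i ∈ Finset.range n, Y i ω) / n)
          atTop (nhds (c + μ₀)) := tendsto_const_nhds.add hlim
      refine h1.congr' ?_
      filter_upwards [eventually_ge_atTop 1] with n hn
      have hn' : (0:ℝ) < n := by exact_mod_cast hn
      field_simp
    have hev : (fun n : ℕ => (n:ℝ) * c + ∑ i ∈ Finset.range n, Y i ω)
        ≤ᶠ[atTop] (fun n : ℕ => ((c + μ₀)/2) * n) := by
      have h2 := hdiv.eventually_lt_const (show c + μ₀ < (c + μ₀)/2 by linarith)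
      filter_upwards [h2, eventually_ge_atTop 1] with n hn2 hn1
      have hn' : (0:ℝ) < n := by exact_mod_cast hn1
      rw [div_lt_iff₀ hn'] at hn2
      linarith
    refine tendsto_atBot_mono' atTop hev ?_
    exact (tendsto_const_mul_atBot_of_neg (by linarith)).mpr tendsto_natCast_atTop_atTop
  have hq0 : Tendsto q atTop (nhds 0) :=
    (Real.tendsto_exp_atBot.comp hAtendsto).congr (fun n => (hqexp n).symm)
  have haabs : (0:ℝ) < |a| := abs_pos.mpr ha
  have hq0' : Tendsto (fun n => q n / (2 * |a|)) atTop (nhds 0) := by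
    simpa using hq0.div_const (2 * |a|)
  refine squeeze_zero_norm' ?_ hq0'
  filter_upwards [eventually_ge_atTop 1] with n hn
  obtain ⟨m, rfl⟩ : ∃ m, n = m + 1 := ⟨n - 1, by omega⟩
  have hxb : |x (m+1) ω - b/a|
      ≤ (∏ i ∈ Finset.range (m+1), (Real.sqrt 2 * |ξ i ω| / β)) / (2 * |a|) := by
    rw [habs m]
    have h1 : u m * |ξ m ω| / (Real.sqrt 2 * |a| * β)
        ≤ (∏ i ∈ Finset.range m, (Real.sqrt 2 * |ξ i ω| / β)) * |ξ m ω|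
          / (Real.sqrt 2 * |a| * β) := by
      apply div_le_div_of_nonneg_right ?_ (by positivity)
      exact mul_le_mul_of_nonneg_right (hbound m) (abs_nonneg _)
    refine h1.trans (le_of_eq ?_)
    rw [Finset.prod_range_succ]
    field_simp
    linear_combination (-((∏ x ∈ Finset.range m, Real.sqrt 2 * |ξ x ω| / β) * |ξ m ω|)) * h22
  have hq : q (m+1) = s^(m+1) * ∏ i ∈ Finset.range (m+1), (Real.sqrt 2 * |ξ i ω| / β) := by
    rw [hqdef]
    simp only []
    rw [Finset.prod_mul_distrib, Finset.prod_const, Finset.card_range]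
  rw [Real.norm_eq_abs, abs_mul, abs_pow, abs_of_pos hs0, hq]
  calc s^(m+1) * |x (m+1) ω - b/a|
      ≤ s^(m+1) * ((∏ i ∈ Finset.range (m+1), (Real.sqrt 2 * |ξ i ω| / β)) / (2 * |a|)) :=
        mul_le_mul_of_nonneg_left hxb (by positivity)
    _ = s^(m+1) * (∏ i ∈ Finset.range (m+1), (Real.sqrt 2 * |ξ i ω| / β)) / (2 * |a|) := by
        ring
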